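/- For fixed positive integers β and fixed α > 0, setting k = ⌊α p log p⌋, one has lim_{p→∞} [ binom(β + k, k)^{p/(2k)} / exp(β/(2α)) − 1 ] · (log p / log log p) = β/(2α). -/

import Mathlib

open Filter
open Real

/-- For fixed positive integer `β` and fixed `α > 0`, with `k = ⌊α p log p⌋`,
`lim_{p→∞} [ C(β + k, k)^(p/(2k)) / exp(β/(2α)) − 1 ] · (log p / log log p) = β/(2α)`. -/
theorem stmt11 (β : ℕ) (hβ : 0 < β) (α : ℝ) (hα : 0 < α) :
    Tendsto (fun p : ℕ =>
        (((β + ⌊α * p * Real.log p⌋₊).choose ⌊α * p * Real.log p⌋₊ : ℝ)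
            ^ ((p : ℝ) / (2 * (⌊α * p * Real.log p⌋₊ : ℝ))) / Real.exp (β / (2 * α)) - 1)
          * (Real.log p / Real.log (Real.log p)))
      atTop (nhds (β / (2 * α))) := by
  set x : ℕ → ℝ := fun p => α * p * Real.log p with hxdef
  set K : ℕ → ℝ := fun p => (⌊x p⌋₊ : ℝ) with hKdef
  set lp : ℕ → ℝ := fun p => Real.log p with hlpdef
  set llp : ℕ → ℝ := fun p => Real.log (Real.log p) with hllpdef
  -- base limits
  have hx_top : Tendsto x atTop atTop := by
    have h1 : Tendsto (fun p : ℕ => α * (p : ℝ)) atTop atTop :=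
      (tendsto_natCast_atTop_atTop).const_mul_atTop hα
    have h2 : Tendsto (fun p : ℕ => Real.log p) atTop atTop :=
      Real.tendsto_log_atTop.comp tendsto_natCast_atTop_atTop
    exact h1.atTop_mul_atTop₀ h2
  have hk_top : Tendsto (fun p => ⌊x p⌋₊) atTop atTop :=
    tendsto_nat_floor_atTop.comp hx_top
  have hK_top : Tendsto K atTop atTop := tendsto_natCast_atTop_atTop.comp hk_top
  have hlp_top : Tendsto lp atTop atTop :=
    Real.tendsto_log_atTop.comp tendsto_natCast_atTop_atTop
  have hllp_top : Tendsto llp atTop atTop := Real.tendsto_log_atTop.comp hlp_top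
  have hKx : Tendsto (fun p => K p / x p) atTop (nhds 1) :=
    tendsto_nat_floor_div_atTop.comp hx_top
  have hxK : Tendsto (fun p => x p / K p) atTop (nhds 1) := by
    have := (hKx.inv₀ one_ne_zero)
    simpa [inv_div] using this
  have hinvllp : Tendsto (fun p => (llp p)⁻¹) atTop (nhds 0) :=
    tendsto_inv_atTop_zero.comp hllp_top
  have hlogdiv : Tendsto (fun p => llp p / lp p) atTop (nhds 0) :=
    (Real.isLittleO_log_id_atTop.tendsto_div_nhds_zero).comp hlp_top
  -- eventual positivity
  have hev : ∀ᶠ p : ℕ in atTop, 1 ≤ K p ∧ 1 ≤ lp p ∧ 0 < llp p ∧ 0 < x p ∧ 0 < (p : ℝ) := by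
    filter_upwards [hK_top.eventually_ge_atTop 1, hlp_top.eventually_ge_atTop 1,
      hllp_top.eventually_gt_atTop 0, hx_top.eventually_gt_atTop 0,
      eventually_gt_atTop 0] with p h1 h2 h3 h4 h5
    exact ⟨h1, h2, h3, h4, by exact_mod_cast h5⟩
  -- lp/K → 0
  have hlpK : Tendsto (fun p => lp p / K p) atTop (nhds 0) := by
    have h1 : Tendsto (fun p : ℕ => (α * p)⁻¹) atTop (nhds 0) :=
      tendsto_inv_atTop_zero.comp ((tendsto_natCast_atTop_atTop).const_mul_atTop hα)
    have h2 : Tendsto (fun p : ℕ => (α * p)⁻¹ * (x p / K p)) atTop (nhds (0 * 1)) :=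
      h1.mul hxK
    rw [zero_mul] at h2
    apply h2.congr'
    filter_upwards [hev] with p ⟨h1, h2, h3, h4, h5⟩
    have hp : (0:ℝ) < α * p := by positivity
    have hlpne : lp p ≠ 0 := by linarith
    field_simp [hxdef]
    rfl
  -- the main auxiliary limit
  have Fmain : ∀ c : ℝ, 0 < c → Tendsto (fun p =>
      ((p / (2 * K p)) * ((β : ℝ) * Real.log (K p + c) - Real.log (β.factorial))
        - β / (2 * α)) * (lp p / llp p)) atTop (nhds (β / (2 * α))) := by
    intro c hc
    -- δ → 0
    have hratio : Tendsto (fun p => (K p + c) / x p) atTop (nhds 1) := by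
      have h1 : Tendsto (fun p : ℕ => c / x p) atTop (nhds 0) :=
        tendsto_const_nhds.div_atTop hx_top
      have h2 := hKx.add h1
      rw [add_zero] at h2
      apply h2.congr
      intro p
      exact (add_div _ _ _).symm
    have hdelta : Tendsto (fun p => Real.log ((K p + c) / x p)) atTop (nhds 0) := by
      have := ((Real.continuousAt_log one_ne_zero).tendsto).comp hratio
      simpa [Function.comp_def] using this
    -- T2 → 1
    have hT2 : Tendsto (fun p => (Real.log (K p + c) - lp p) / llp p) atTop (nhds 1) := by
      have hnum : Tendsto (fun p => Real.log α + Real.log ((K p + c) / x p))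
          atTop (nhds (Real.log α + 0)) := tendsto_const_nhds.add hdelta
      have hbase : Tendsto
          (fun p => 1 + (Real.log α + Real.log ((K p + c) / x p)) / llp p)
          atTop (nhds (1 + 0)) :=
        tendsto_const_nhds.add (hnum.div_atTop hllp_top)
      rw [add_zero] at hbase
      apply hbase.congr'
      filter_upwards [hev] with p hp
      obtain ⟨hK1, hlp1, hllp0, hx0, hp0⟩ := hp
      have hK0 : (0:ℝ) < K p := lt_of_lt_of_le one_pos hK1
      have hKc : (0:ℝ) < K p + c := by linarith
      have hlp0 : (0:ℝ) < lp p := lt_of_lt_of_le one_pos hlp1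
      have hid : (K p + c) / (p : ℝ) = α * lp p * ((K p + c) / x p) := by
        rw [hxdef]
        field_simp
        exact (mul_inv_cancel₀ hlp0.ne').symm
      have e1 : Real.log (K p + c) - lp p
          = Real.log α + llp p + Real.log ((K p + c) / x p) := by
        have h3 : Real.log ((K p + c) / (p : ℝ)) = Real.log (K p + c) - lp p :=
          Real.log_div (ne_of_gt hKc) (ne_of_gt hp0)
        rw [← h3, hid, Real.log_mul (by positivity) (by positivity),
          Real.log_mul (ne_of_gt hα) (ne_of_gt hlp0)]
      rw [e1]
      field_simp
      ring
    -- T3 → 0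
    have hT3 : Tendsto (fun p => ((x p - K p) / K p) * (lp p / llp p)) atTop (nhds 0) := by
      apply tendsto_of_tendsto_of_tendsto_of_le_of_le' tendsto_const_nhds hlpK
      · filter_upwards [hev] with p hp
        obtain ⟨hK1, hlp1, hllp0, hx0, hp0⟩ := hp
        have hK0 : (0:ℝ) < K p := lt_of_lt_of_le one_pos hK1
        have hfl : K p ≤ x p := Nat.floor_le (le_of_lt hx0)
        apply mul_nonneg (div_nonneg (by linarith) hK0.le) (div_nonneg (by linarith) hllp0.le)
      · filter_upwards [hev, hllp_top.eventually_ge_atTop 1] with p hp hllp1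
        obtain ⟨hK1, hlp1, hllp0, hx0, hp0⟩ := hp
        have hK0 : (0:ℝ) < K p := lt_of_lt_of_le one_pos hK1
        have hfl : K p ≤ x p := Nat.floor_le (le_of_lt hx0)
        have hfl2 : x p - K p ≤ 1 := by
          have := Nat.lt_floor_add_one (x p)
          rw [hKdef]
          rw [hKdef] at hfl
          linarith [this]
        have h1 : (x p - K p) / K p ≤ 1 / K p := by gcongr
        have h2 : lp p / llp p ≤ lp p := by
          apply div_le_self (by linarith) hllp1
        calc (x p - K p) / K p * (lp p / llp p) ≤ (1 / K p) * lp p := by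
              apply mul_le_mul h1 h2 (by positivity) (by positivity)
          _ = lp p / K p := by ring
    -- H → 0
    have hH : Tendsto (fun p => (-(Real.log β.factorial) / (2 * α))
        * ((x p / K p) * (llp p)⁻¹)) atTop (nhds 0) := by
      have := (hxK.mul hinvllp).const_mul (-(Real.log β.factorial) / (2 * α))
      simpa using this
    -- combine
    have hsum : Tendsto (fun p => ((β : ℝ) / (2 * α)) *
        ((x p / K p) * ((Real.log (K p + c) - lp p) / llp p)
          + ((x p - K p) / K p) * (lp p / llp p))
        + (-(Real.log β.factorial) / (2 * α)) * ((x p / K p) * (llp p)⁻¹))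
        atTop (nhds (((β : ℝ) / (2 * α)) * (1 * 1 + 0) + 0)) :=
      (((hxK.mul hT2).add hT3).const_mul _).add hH
    have : ((β : ℝ) / (2 * α)) * (1 * 1 + 0) + 0 = (β : ℝ) / (2 * α) := by ring
    rw [this] at hsum
    apply hsum.congr'
    filter_upwards [hev] with p hp
    obtain ⟨hK1, hlp1, hllp0, hx0, hp0⟩ := hp
    have hK0 : (0:ℝ) < K p := lt_of_lt_of_le one_pos hK1
    have hxp : x p = α * p * lp p := by rw [hxdef]
    rw [hxp]
    field_simp
    ring
  -- abbreviations for the final part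
  set C : ℕ → ℝ := fun p => ((β + ⌊x p⌋₊).choose ⌊x p⌋₊ : ℝ) with hCdef
  set E : ℕ → ℝ := fun p => (p / (2 * K p)) * Real.log (C p) - β / (2 * α) with hEdef
  set L : ℕ → ℝ := fun p => lp p / llp p with hLdef
  have hC1 : ∀ p, (1 : ℝ) ≤ C p := by
    intro p
    show (1:ℝ) ≤ ((β + ⌊x p⌋₊).choose ⌊x p⌋₊ : ℝ)
    exact_mod_cast Nat.one_le_iff_ne_zero.mpr
      (Nat.choose_pos (Nat.le_add_left _ _)).ne'
  -- squeeze for E * L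
  have hEL : Tendsto (fun p => E p * L p) atTop (nhds (β / (2 * α))) := by
    have hcβ : (0 : ℝ) < (β : ℝ) := by exact_mod_cast hβ
    apply tendsto_of_tendsto_of_tendsto_of_le_of_le' (Fmain 1 one_pos) (Fmain β hcβ)
    · filter_upwards [hev] with p hp
      obtain ⟨hK1, hlp1, hllp0, hx0, hp0⟩ := hp
      set k : ℕ := ⌊x p⌋₊ with hkdef
      have hK0 : (0:ℝ) < K p := lt_of_lt_of_le one_pos hK1
      have hnat1 : (k + 1) ^ β ≤ β.factorial * ((β + k).choose k) := by
        have h1 := Nat.pow_succ_le_ascFactorial (k + 1) β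
        have h2 := Nat.ascFactorial_eq_factorial_mul_choose k β
        have h3 : (β + k).choose k = (k + β).choose β := by
          rw [Nat.add_comm β k]
          have := Nat.choose_symm (Nat.le_add_left β k)
          rw [Nat.add_sub_cancel] at this
          exact this
        rw [h3]
        omega
      have hreal1 : (K p + 1) ^ β ≤ (β.factorial : ℝ) * C p := by
        show ((⌊x p⌋₊ : ℝ) + 1) ^ β ≤ (β.factorial : ℝ) * ((β + ⌊x p⌋₊).choose ⌊x p⌋₊ : ℝ)
        exact_mod_cast hnat1
      have hlog1 : (β : ℝ) * Real.log (K p + 1) - Real.log (β.factorial) ≤ Real.log (C p) := by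
        have h4 : Real.log ((K p + 1) ^ β) ≤ Real.log ((β.factorial : ℝ) * C p) :=
          Real.log_le_log (by positivity) hreal1
        rw [Real.log_pow, Real.log_mul (by positivity)
          (by linarith [hC1 p])] at h4
        linarith
      have hr0 : (0:ℝ) ≤ (p : ℝ) / (2 * K p) :=
        div_nonneg (Nat.cast_nonneg p) (by linarith)
      have hL0 : (0:ℝ) ≤ L p :=
        div_nonneg (by linarith) (le_of_lt hllp0)
      rw [hEdef, hLdef]
      apply mul_le_mul_of_nonneg_right _ hL0
      have := mul_le_mul_of_nonneg_left hlog1 hr0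
      linarith
    · filter_upwards [hev] with p hp
      obtain ⟨hK1, hlp1, hllp0, hx0, hp0⟩ := hp
      set k : ℕ := ⌊x p⌋₊ with hkdef
      have hK0 : (0:ℝ) < K p := lt_of_lt_of_le one_pos hK1
      have hnat2 : β.factorial * ((β + k).choose k) ≤ (k + β) ^ β := by
        have h1 := Nat.ascFactorial_le_pow_add k β
        have h2 := Nat.ascFactorial_eq_factorial_mul_choose k β
        have h3 : (β + k).choose k = (k + β).choose β := by
          rw [Nat.add_comm β k]
          have := Nat.choose_symm (Nat.le_add_left β k)
          rw [Nat.add_sub_cancel] at this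
          exact this
        rw [h3]
        omega
      have hreal2 : (β.factorial : ℝ) * C p ≤ (K p + β) ^ β := by
        show (β.factorial : ℝ) * ((β + ⌊x p⌋₊).choose ⌊x p⌋₊ : ℝ) ≤ ((⌊x p⌋₊ : ℝ) + β) ^ β
        exact_mod_cast hnat2
      have hlog2 : Real.log (C p) ≤ (β : ℝ) * Real.log (K p + β) - Real.log (β.factorial) := by
        have h4 : Real.log ((β.factorial : ℝ) * C p) ≤ Real.log ((K p + β) ^ β) :=
          Real.log_le_log (mul_pos (by positivity) (lt_of_lt_of_le one_pos (hC1 p))) hreal2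
        rw [Real.log_pow, Real.log_mul (by positivity)
          (by linarith [hC1 p])] at h4
        linarith
      have hr0 : (0:ℝ) ≤ (p : ℝ) / (2 * K p) :=
        div_nonneg (Nat.cast_nonneg p) (by linarith)
      have hL0 : (0:ℝ) ≤ L p :=
        div_nonneg (by linarith) (le_of_lt hllp0)
      rw [hEdef, hLdef]
      apply mul_le_mul_of_nonneg_right _ hL0
      have := mul_le_mul_of_nonneg_left hlog2 hr0
      linarith
  -- E → 0
  have hE0 : Tendsto E atTop (nhds 0) := by
    have h1 := hEL.mul hlogdiv
    rw [mul_zero] at h1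
    apply h1.congr'
    filter_upwards [hev] with p hp
    obtain ⟨hK1, hlp1, hllp0, hx0, hp0⟩ := hp
    have hlp0 : (0:ℝ) < lp p := lt_of_lt_of_le one_pos hlp1
    rw [hLdef]
    field_simp
  -- second-order term → 0
  have hexp : Tendsto (fun p => (Real.exp (E p) - 1 - E p) * L p) atTop (nhds 0) := by
    have hg : Tendsto (fun p => |E p * L p| * |E p|) atTop (nhds (|β / (2 * α)| * |0|)) :=
      hEL.abs.mul hE0.abs
    rw [abs_zero, mul_zero] at hg
    apply squeeze_zero_norm' _ hg
    have hsm := NormedAddCommGroup.tendsto_nhds_zero.mp hE0 1 one_pos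
    filter_upwards [hsm] with p hp
    have h1 : |E p| ≤ 1 := le_of_lt (by simpa using hp)
    calc ‖(Real.exp (E p) - 1 - E p) * L p‖
        = |Real.exp (E p) - 1 - E p| * |L p| := abs_mul _ _
      _ ≤ E p ^ 2 * |L p| :=
          mul_le_mul_of_nonneg_right (Real.abs_exp_sub_one_sub_id_le h1) (abs_nonneg _)
      _ = |E p * L p| * |E p| := by
          rw [abs_mul, ← sq_abs]
          ring
  -- final combination
  have hfin : Tendsto (fun p => (Real.exp (E p) - 1 - E p) * L p + E p * L p)
      atTop (nhds (0 + β / (2 * α))) := hexp.add hEL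
  rw [zero_add] at hfin
  apply hfin.congr
  intro p
  have hCpos : (0:ℝ) < C p := lt_of_lt_of_le one_pos (hC1 p)
  have hrpow : C p ^ ((p : ℝ) / (2 * K p)) =
      Real.exp (((p : ℝ) / (2 * K p)) * Real.log (C p)) := by
    rw [Real.rpow_def_of_pos hCpos, mul_comm]
  have hsplit : (Real.exp (E p) - 1 - E p) * L p + E p * L p = (Real.exp (E p) - 1) * L p := by
    ring
  rw [hsplit, hEdef, hLdef]
  simp only [hCdef, hKdef, hxdef, hlpdef, hllpdef] at hrpow ⊢
  rw [hrpow, Real.exp_sub]
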